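/- Under the random-intercept crossed effects design with K ≥ 2 factors, let ν̄_1 ≤ ⋯ ≤ ν̄_{p−1} be the eigenvalues (nondecreasing, with multiplicity) of Ā^(r). Then ν̄_1 = ⋯ = ν̄_{K−1} = −1/(K−1) and ν̄_{p−1} = 1. -/

import Mathlib

open Matrix

namespace Crossed

/-- Coordinates of the random effects: `⟨k, a⟩` is level `a` of factor `k`. -/
abbrev Lvl (K : ℕ) (G : Fin K → ℕ) := Σ k : Fin K, Fin (G k)

/-- The restricted design matrix `V^(r)` (intercept column removed). -/
noncomputable def Vr (K N : ℕ) (G : Fin K → ℕ) (g : Fin N → ∀ k : Fin K, Fin (G k)) :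
    Matrix (Fin N) (Lvl K G) ℝ :=
  fun i s => if g i s.1 = s.2 then 1 else 0

/-- `U^(r) = (V^(r))ᵀ V^(r)`. -/
noncomputable def Ur (K N : ℕ) (G : Fin K → ℕ) (g : Fin N → ∀ k : Fin K, Fin (G k)) :
    Matrix (Lvl K G) (Lvl K G) ℝ :=
  (Vr K N G g)ᵀ * Vr K N G g

/-- `A^(r) = U^(r) − Diag(U^(r))`. -/
noncomputable def Ar (K N : ℕ) (G : Fin K → ℕ) (g : Fin N → ∀ k : Fin K, Fin (G k)) :
    Matrix (Lvl K G) (Lvl K G) ℝ :=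
  Ur K N G g - diagonal (fun c => Ur K N G g c c)

/-- `Ā^(r) = (D^(r))^{−1/2} A^(r) (D^(r))^{−1/2}` with `D^(r) = (K−1)·Diag(U^(r))`. -/
noncomputable def Abar (K N : ℕ) (G : Fin K → ℕ) (g : Fin N → ∀ k : Fin K, Fin (G k)) :
    Matrix (Lvl K G) (Lvl K G) ℝ :=
  diagonal (fun c => (Real.sqrt (((K : ℝ) - 1) * Ur K N G g c c))⁻¹) * Ar K N G g *
    diagonal (fun c => (Real.sqrt (((K : ℝ) - 1) * Ur K N G g c c))⁻¹)

section
variable (K N : ℕ) (G : Fin K → ℕ) (g : Fin N → ∀ k : Fin K, Fin (G k))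

lemma Ur_diag (c : Lvl K G) :
    Ur K N G g c c = ∑ i, (if g i c.1 = c.2 then (1:ℝ) else 0) := by
  simp only [Ur, Vr, Matrix.mul_apply, transpose_apply]
  congr 1; ext i; by_cases h : g i c.1 = c.2 <;> simp [h]

lemma one_le_Ur_diag (hobs : ∀ (k : Fin K) (a : Fin (G k)), ∃ i, g i k = a)
    (c : Lvl K G) : 1 ≤ Ur K N G g c c := by
  obtain ⟨i, hi⟩ := hobs c.1 c.2
  rw [Ur_diag]
  calc (1:ℝ) = if g i c.1 = c.2 then (1:ℝ) else 0 := by simp [hi]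
    _ ≤ _ := Finset.single_le_sum (f := fun i => if g i c.1 = c.2 then (1:ℝ) else 0)
        (fun j _ => by positivity) (Finset.mem_univ i)


/-- the scaling diagonal matrix -/
noncomputable def Fm : Matrix (Lvl K G) (Lvl K G) ℝ :=
  diagonal (fun c => (Real.sqrt (((K : ℝ) - 1) * Ur K N G g c c))⁻¹)

variable (hK : 2 ≤ K) (hobs : ∀ (k : Fin K) (a : Fin (G k)), ∃ i, g i k = a) (hGk' : ∀ k, 1 ≤ G k)

include hK in
lemma Kr_pos : (0:ℝ) < (K:ℝ) - 1 := by
  have : (2:ℝ) ≤ (K:ℝ) := by exact_mod_cast hK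
  linarith

include hK hobs in
lemma arg_pos (c : Lvl K G) : 0 < ((K : ℝ) - 1) * Ur K N G g c c :=
  mul_pos (Kr_pos K hK) (lt_of_lt_of_le one_pos (one_le_Ur_diag K N G g hobs c))

include hK hobs in
lemma Fm_diag_Fm :
    Fm K N G g * diagonal (fun c => Ur K N G g c c) * Fm K N G g
      = ((K:ℝ) - 1)⁻¹ • (1 : Matrix (Lvl K G) (Lvl K G) ℝ) := by
  rw [Fm, diagonal_mul_diagonal, diagonal_mul_diagonal]
  have : (((K:ℝ) - 1)⁻¹ • (1 : Matrix (Lvl K G) (Lvl K G) ℝ))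
      = diagonal (fun _ => ((K:ℝ) - 1)⁻¹) := by
    ext a b; by_cases h : a = b <;> simp [h, Matrix.one_apply, diagonal]
  rw [this, Matrix.diagonal_eq_diagonal_iff]
  intro c
  have hpos := arg_pos K N G g hK hobs c
  have hs : Real.sqrt (((K : ℝ) - 1) * Ur K N G g c c) *
      Real.sqrt (((K : ℝ) - 1) * Ur K N G g c c) = ((K : ℝ) - 1) * Ur K N G g c c :=
    Real.mul_self_sqrt hpos.le
  have hU : Ur K N G g c c ≠ 0 := by
    have := one_le_Ur_diag K N G g hobs c; linarith
  have hsne : Real.sqrt (((K : ℝ) - 1) * Ur K N G g c c) ≠ 0 :=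
    (Real.sqrt_pos.mpr hpos).ne'
  have hKne : ((K:ℝ) - 1) ≠ 0 := (Kr_pos K hK).ne'
  field_simp
  rw [Real.sq_sqrt (by nlinarith [hpos])]

include hK hobs in
lemma abar_add_eq :
    Abar K N G g + ((K:ℝ) - 1)⁻¹ • (1 : Matrix (Lvl K G) (Lvl K G) ℝ)
      = Fm K N G g * Ur K N G g * Fm K N G g := by
  have h := Fm_diag_Fm K N G g hK hobs
  rw [Abar, Ar]
  rw [show (diagonal (fun c => (Real.sqrt (((K : ℝ) - 1) * Ur K N G g c c))⁻¹) :
      Matrix (Lvl K G) (Lvl K G) ℝ) = Fm K N G g from rfl]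
  rw [Matrix.mul_sub, Matrix.sub_mul, h]
  abel

lemma B_factor :
    Fm K N G g * Ur K N G g * Fm K N G g
      = (Vr K N G g * Fm K N G g)ᵀ * (Vr K N G g * Fm K N G g) := by
  rw [Matrix.transpose_mul, Ur, Fm, Matrix.diagonal_transpose]
  simp only [Matrix.mul_assoc]

include hK hobs in
lemma B_posSemidef :
    (Abar K N G g + ((K:ℝ) - 1)⁻¹ • (1 : Matrix (Lvl K G) (Lvl K G) ℝ)).PosSemidef := by
  rw [abar_add_eq K N G g hK hobs, B_factor]
  rw [← conjTranspose_eq_transpose_of_trivial]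
  exact posSemidef_conjTranspose_mul_self _


lemma Vr_mulVec (x : Lvl K G → ℝ) (i : Fin N) :
    (Vr K N G g *ᵥ x) i = ∑ k, x ⟨k, g i k⟩ := by
  rw [mulVec, dotProduct, ← Finset.univ_sigma_univ, Finset.sum_sigma]
  congr 1; funext k
  simp [Vr]

lemma dot_diag (x : Lvl K G → ℝ) :
    x ⬝ᵥ (diagonal (fun c => Ur K N G g c c) *ᵥ x)
      = ∑ i, ∑ k, (x ⟨k, g i k⟩)^2 := by
  rw [Finset.sum_comm]
  rw [dotProduct]
  rw [← Finset.univ_sigma_univ, Finset.sum_sigma]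
  congr 1; funext k
  simp only [mulVec_diagonal, Ur_diag]
  have h1 : ∀ a : Fin (G k), x ⟨k, a⟩ * ((∑ i : Fin N, if g i k = a then (1:ℝ) else 0) * x ⟨k, a⟩)
      = ∑ i : Fin N, (if g i k = a then x ⟨k, a⟩ ^ 2 else 0) := by
    intro a
    rw [Finset.sum_mul, Finset.mul_sum]
    refine Finset.sum_congr rfl fun i _ => ?_
    by_cases h : g i k = a <;> simp [h, sq]
  rw [Finset.sum_congr rfl fun a _ => h1 a, Finset.sum_comm]
  refine Finset.sum_congr rfl fun i _ => ?_
  simp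

lemma C_posSemidef :
    ((K:ℝ) • diagonal (fun c => Ur K N G g c c) - Ur K N G g).PosSemidef := by
  refine Matrix.PosSemidef.of_dotProduct_mulVec_nonneg ?_ ?_
  · unfold Matrix.IsHermitian
    rw [conjTranspose_eq_transpose_of_trivial]
    rw [Matrix.transpose_sub, Matrix.transpose_smul, Matrix.diagonal_transpose]
    rw [Ur, Matrix.transpose_mul, Matrix.transpose_transpose, ← Ur]
  · intro x
    have hstar : star x = x := by simp
    rw [hstar, Matrix.sub_mulVec, dotProduct_sub, Matrix.smul_mulVec,
      dotProduct_smul]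
    have hUr : x ⬝ᵥ (Ur K N G g *ᵥ x)
        = ∑ i, (∑ k, x ⟨k, g i k⟩)^2 := by
      rw [Ur, ← Matrix.mulVec_mulVec, Matrix.dotProduct_mulVec, Matrix.vecMul_transpose]
      rw [dotProduct]
      congr 1; funext i
      rw [Vr_mulVec, sq]
    rw [hUr, dot_diag, smul_eq_mul, Finset.mul_sum, ← Finset.sum_sub_distrib]
    apply Finset.sum_nonneg
    intro i _
    rw [sub_nonneg]
    have := sq_sum_le_card_mul_sum_sq (s := (Finset.univ : Finset (Fin K)))
      (f := fun k => x ⟨k, g i k⟩)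
    calc (∑ k, x ⟨k, g i k⟩)^2 ≤ (Finset.univ : Finset (Fin K)).card * ∑ k, (x ⟨k, g i k⟩)^2 := by
          exact_mod_cast this
      _ = (K:ℝ) * ∑ k, (x ⟨k, g i k⟩)^2 := by simp

include hK hobs in
lemma one_sub_abar_eq :
    (1 : Matrix (Lvl K G) (Lvl K G) ℝ) - Abar K N G g
      = Fm K N G g * ((K:ℝ) • diagonal (fun c => Ur K N G g c c) - Ur K N G g) * Fm K N G g := by
  have h1 := Fm_diag_Fm K N G g hK hobs
  have h2 := abar_add_eq K N G g hK hobs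
  have hKne : ((K:ℝ) - 1) ≠ 0 := (Kr_pos K hK).ne'
  rw [Matrix.mul_sub, Matrix.sub_mul, Matrix.mul_smul, Matrix.smul_mul, h1, ← h2]
  rw [smul_smul]
  have : ((K:ℝ) * ((K:ℝ) - 1)⁻¹) • (1 : Matrix (Lvl K G) (Lvl K G) ℝ)
      - (Abar K N G g + ((K:ℝ) - 1)⁻¹ • 1)
      = (((K:ℝ) * ((K:ℝ) - 1)⁻¹ - ((K:ℝ) - 1)⁻¹)) • (1 : Matrix (Lvl K G) (Lvl K G) ℝ)
      - Abar K N G g := by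
    rw [sub_smul]; abel
  rw [this]
  have : (K:ℝ) * ((K:ℝ) - 1)⁻¹ - ((K:ℝ) - 1)⁻¹ = 1 := by field_simp
  rw [this, one_smul]

include hK hobs in
lemma one_sub_posSemidef :
    ((1 : Matrix (Lvl K G) (Lvl K G) ℝ) - Abar K N G g).PosSemidef := by
  rw [one_sub_abar_eq K N G g hK hobs]
  have h := C_posSemidef K N G g
  have := h.mul_mul_conjTranspose_same (Fm K N G g)
  rw [conjTranspose_eq_transpose_of_trivial] at this
  rw [show (Fm K N G g)ᵀ = Fm K N G g by rw [Fm, Matrix.diagonal_transpose]] at this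
  exact this


lemma euclid_dot_self {m : Type*} [Fintype m] (x : EuclideanSpace ℝ m) :
    (⇑x : m → ℝ) ⬝ᵥ (⇑x : m → ℝ) = ‖x‖^2 := by
  rw [← real_inner_self_eq_norm_sq]
  simp only [PiLp.inner_apply, dotProduct, RCLike.inner_apply, conj_trivial]

include hK hobs in
lemma eig_lower (hA : (Abar K N G g).IsHermitian) (i : Lvl K G) :
    -((K:ℝ)-1)⁻¹ ≤ hA.eigenvalues i := by
  have hB := B_posSemidef K N G g hK hobs
  have h := hB.dotProduct_mulVec_nonneg (⇑(hA.eigenvectorBasis i))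
  have hmv := hA.mulVec_eigenvectorBasis i
  rw [Matrix.add_mulVec, Matrix.smul_mulVec, Matrix.one_mulVec, hmv] at h
  have hn : ‖hA.eigenvectorBasis i‖ = 1 := hA.eigenvectorBasis.orthonormal.1 i
  have hds := euclid_dot_self (hA.eigenvectorBasis i)
  rw [hn] at hds
  simp only [star_trivial, dotProduct_add, dotProduct_smul, smul_eq_mul, hds,
    one_pow, mul_one, RCLike.re_to_real] at h
  linarith

include hK hobs in
lemma eig_upper (hA : (Abar K N G g).IsHermitian) (i : Lvl K G) :
    hA.eigenvalues i ≤ 1 := by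
  have hB := one_sub_posSemidef K N G g hK hobs
  have h := hB.dotProduct_mulVec_nonneg (⇑(hA.eigenvectorBasis i))
  have hmv := hA.mulVec_eigenvectorBasis i
  rw [Matrix.sub_mulVec, Matrix.one_mulVec, hmv] at h
  have hn : ‖hA.eigenvectorBasis i‖ = 1 := hA.eigenvectorBasis.orthonormal.1 i
  have hds := euclid_dot_self (hA.eigenvectorBasis i)
  rw [hn] at hds
  simp only [star_trivial, dotProduct_sub, dotProduct_smul, smul_eq_mul, hds,
    one_pow, mul_one, RCLike.re_to_real] at h
  linarith

/-- the eigenvector for eigenvalue 1 -/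
noncomputable def w : Lvl K G → ℝ := fun s => Real.sqrt (((K:ℝ)-1) * Ur K N G g s s)

include hK hobs in
lemma Fm_mulVec_w : Fm K N G g *ᵥ w K N G g = fun _ => (1:ℝ) := by
  funext s
  rw [Fm, Matrix.mulVec_diagonal, w]
  exact inv_mul_cancel₀ (Real.sqrt_pos.mpr (arg_pos K N G g hK hobs s)).ne'

lemma C_mulVec_ones :
    ((K:ℝ) • diagonal (fun c => Ur K N G g c c) - Ur K N G g) *ᵥ (fun _ => (1:ℝ)) = 0 := by
  funext s
  rw [Matrix.sub_mulVec, Matrix.smul_mulVec]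
  have h1 : (Ur K N G g *ᵥ fun _ => (1:ℝ)) s = (K:ℝ) * Ur K N G g s s := by
    have h3 : ((Vr K N G g)ᵀ *ᵥ fun _ => (1:ℝ)) = fun t => Ur K N G g t t := by
      funext t; rw [Ur_diag]; simp [Matrix.mulVec, dotProduct, Vr]
    have h2 : (Vr K N G g *ᵥ fun _ => (1:ℝ)) = fun _ => (K:ℝ) := by
      funext i; rw [Vr_mulVec]; simp
    have h4 : (fun _ : Fin N => (K:ℝ)) = (K:ℝ) • (fun _ : Fin N => (1:ℝ)) := by
      funext i; simp
    rw [Ur, ← Matrix.mulVec_mulVec, h2, h4, Matrix.mulVec_smul, h3]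
    simp [Ur]
  simp only [Pi.sub_apply, Pi.smul_apply, Matrix.mulVec_diagonal, h1, smul_eq_mul, mul_one,
    Pi.zero_apply]
  ring

include hK hobs in
lemma abar_mulVec_w : Abar K N G g *ᵥ w K N G g = w K N G g := by
  have h := one_sub_abar_eq K N G g hK hobs
  have : ((1 : Matrix (Lvl K G) (Lvl K G) ℝ) - Abar K N G g) *ᵥ w K N G g = 0 := by
    rw [h, ← Matrix.mulVec_mulVec, ← Matrix.mulVec_mulVec, Fm_mulVec_w K N G g hK hobs,
      C_mulVec_ones, Matrix.mulVec_zero]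
  rw [Matrix.sub_mulVec, Matrix.one_mulVec, sub_eq_zero] at this
  exact this.symm

include hK hobs hGk' in
lemma exists_eig_one (hA : (Abar K N G g).IsHermitian) :
    ∃ i, hA.eigenvalues i = 1 := by
  by_contra hcon
  push_neg at hcon
  -- Abar - 1 has nonzero determinant
  have hU : (hA.eigenvectorUnitary : Matrix (Lvl K G) (Lvl K G) ℝ) *
      (star hA.eigenvectorUnitary : Matrix (Lvl K G) (Lvl K G) ℝ) = 1 :=
    Matrix.mem_unitaryGroup_iff.mp hA.eigenvectorUnitary.2
  have hspec := hA.spectral_theorem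
  have hsub : Abar K N G g - 1
      = (hA.eigenvectorUnitary : Matrix (Lvl K G) (Lvl K G) ℝ) *
        (diagonal (fun i => hA.eigenvalues i - 1)) *
        (star hA.eigenvectorUnitary : Matrix (Lvl K G) (Lvl K G) ℝ) := by
    calc Abar K N G g - 1
        = (hA.eigenvectorUnitary : Matrix (Lvl K G) (Lvl K G) ℝ) *
          (diagonal (RCLike.ofReal ∘ hA.eigenvalues) - 1) *
          (star hA.eigenvectorUnitary : Matrix (Lvl K G) (Lvl K G) ℝ) := by
          rw [Matrix.mul_sub, Matrix.sub_mul, Matrix.mul_one, hU, ← Unitary.conjStarAlgAut_apply (S := ℝ), ← hspec]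
      _ = _ := by
          congr 2
          rw [← Matrix.diagonal_one, Matrix.diagonal_sub]
          rw [Matrix.diagonal_eq_diagonal_iff]
          intro i
          simp [RCLike.ofReal]
  have hdet : (Abar K N G g - 1).det ≠ 0 := by
    rw [hsub, Matrix.det_mul, Matrix.det_mul, mul_comm, ← mul_assoc, ← Matrix.det_mul]
    rw [show (star hA.eigenvectorUnitary : Matrix (Lvl K G) (Lvl K G) ℝ) *
        (hA.eigenvectorUnitary : Matrix (Lvl K G) (Lvl K G) ℝ) = 1 from
      Matrix.mem_unitaryGroup_iff'.mp hA.eigenvectorUnitary.2]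
    rw [Matrix.det_one, one_mul, Matrix.det_diagonal]
    exact Finset.prod_ne_zero_iff.mpr fun i _ => sub_ne_zero.mpr (hcon i)
  have hw : (Abar K N G g - 1) *ᵥ w K N G g = 0 := by
    rw [Matrix.sub_mulVec, Matrix.one_mulVec, abar_mulVec_w K N G g hK hobs, sub_self]
  have := Matrix.eq_zero_of_mulVec_eq_zero hdet hw
  -- but w is positive somewhere
  have hk0 : (0:ℕ) < K := by omega
  obtain ⟨a0⟩ : Nonempty (Fin (G ⟨0, hk0⟩)) := by
    have := hGk' ⟨0, hk0⟩; exact ⟨⟨0, this⟩⟩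
  have hws : w K N G g ⟨⟨0, hk0⟩, a0⟩ = 0 := congrFun this _
  rw [w] at hws
  exact absurd hws (Real.sqrt_pos.mpr (arg_pos K N G g hK hobs _)).ne'


include hK hobs hGk' in
lemma card_low_eigs (hA : (Abar K N G g).IsHermitian) :
    K - 1 ≤ Fintype.card {i : Lvl K G // hA.eigenvalues i = -((K:ℝ)-1)⁻¹} := by
  classical
  set B : Matrix (Lvl K G) (Lvl K G) ℝ := Abar K N G g + ((K:ℝ)-1)⁻¹ • 1 with hBdef
  set L := B.mulVecLin with hLdef
  have hB2 : B = Fm K N G g * Ur K N G g * Fm K N G g := abar_add_eq K N G g hK hobs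
  -- kernel vectors
  have hKlt : K - 1 < K := by omega
  set klast : Fin K := ⟨K - 1, hKlt⟩ with hklast
  have hjlt : ∀ j : Fin (K-1), (j : ℕ) < K := fun j => by omega
  set kj : Fin (K-1) → Fin K := fun j => ⟨(j : ℕ), hjlt j⟩ with hkj
  have hkj_ne : ∀ j, kj j ≠ klast := by
    intro j h
    have : (j : ℕ) = K - 1 := congrArg Fin.val h
    omega
  have hkj_inj : Function.Injective kj := by
    intro a b h
    have hv : (a : ℕ) = (b : ℕ) := by simpa [hkj, Fin.ext_iff] using h
    exact Fin.ext hv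
  set x : Fin (K-1) → (Lvl K G → ℝ) := fun j s =>
    (if s.1 = kj j then (1:ℝ) else 0) - (if s.1 = klast then (1:ℝ) else 0) with hx
  set y : Fin (K-1) → (Lvl K G → ℝ) := fun j s =>
    Real.sqrt (((K:ℝ)-1) * Ur K N G g s s) * x j s with hy
  have hsne : ∀ s : Lvl K G, Real.sqrt (((K:ℝ)-1) * Ur K N G g s s) ≠ 0 :=
    fun s => (Real.sqrt_pos.mpr (arg_pos K N G g hK hobs s)).ne'
  have hFmy : ∀ j, Fm K N G g *ᵥ y j = x j := by
    intro j
    funext s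
    rw [Fm, Matrix.mulVec_diagonal, hy]
    rw [← mul_assoc, inv_mul_cancel₀ (hsne s), one_mul]
  have hVrx : ∀ j, Vr K N G g *ᵥ x j = 0 := by
    intro j
    funext i
    rw [Vr_mulVec]
    simp only [hx, Finset.sum_sub_distrib]
    rw [Finset.sum_ite_eq' Finset.univ (kj j) (fun _ => (1:ℝ)),
      Finset.sum_ite_eq' Finset.univ klast (fun _ => (1:ℝ))]
    simp
  have hyker : ∀ j, y j ∈ LinearMap.ker L := by
    intro j
    rw [LinearMap.mem_ker, hLdef, Matrix.mulVecLin_apply, hB2,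
      ← Matrix.mulVec_mulVec, ← Matrix.mulVec_mulVec, hFmy, Ur,
      ← Matrix.mulVec_mulVec, hVrx, Matrix.mulVec_zero, Matrix.mulVec_zero]
  have hyli : LinearIndependent ℝ y := by
    rw [Fintype.linearIndependent_iff]
    intro cf hcf j
    have ha0 : 0 < G (kj j) := hGk' (kj j)
    have := congrFun hcf (⟨kj j, ⟨0, ha0⟩⟩ : Lvl K G)
    simp only [Finset.sum_apply, Pi.smul_apply, smul_eq_mul, hy, hx, Pi.zero_apply] at this
    have hsum : ∀ j' : Fin (K-1), cf j' * (Real.sqrt (((K:ℝ)-1) *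
        Ur K N G g ⟨kj j, ⟨0, ha0⟩⟩ ⟨kj j, ⟨0, ha0⟩⟩) *
        ((if kj j = kj j' then (1:ℝ) else 0) - (if kj j = klast then 1 else 0)))
        = (if j' = j then cf j * Real.sqrt (((K:ℝ)-1) *
            Ur K N G g ⟨kj j, ⟨0, ha0⟩⟩ ⟨kj j, ⟨0, ha0⟩⟩) else 0) := by
      intro j'
      by_cases h : j' = j
      · subst h
        simp [hkj_ne j']
      · have : kj j ≠ kj j' := fun hcon => h (hkj_inj hcon).symm
        simp [this, h, hkj_ne j]
    rw [Finset.sum_congr rfl fun j' _ => hsum j'] at this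
    rw [Finset.sum_ite_eq' Finset.univ j] at this
    simp only [Finset.mem_univ, if_true] at this
    exact (mul_eq_zero.mp this).resolve_right (hsne _)
  have hker : K - 1 ≤ Module.finrank ℝ (LinearMap.ker L) := by
    have hsp := finrank_span_eq_card hyli
    have hle : Submodule.span ℝ (Set.range y) ≤ LinearMap.ker L :=
      Submodule.span_le.mpr (by rintro _ ⟨j, rfl⟩; exact hyker j)
    calc K - 1 = Fintype.card (Fin (K-1)) := (Fintype.card_fin _).symm
      _ = Module.finrank ℝ (Submodule.span ℝ (Set.range y)) := hsp.symm
      _ ≤ _ := Submodule.finrank_mono hle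
  -- range vectors
  have hrange : Fintype.card {i : Lvl K G // hA.eigenvalues i ≠ -((K:ℝ)-1)⁻¹}
      ≤ Module.finrank ℝ (LinearMap.range L) := by
    set u : {i : Lvl K G // hA.eigenvalues i ≠ -((K:ℝ)-1)⁻¹} → (Lvl K G → ℝ) :=
      fun i => ⇑(hA.eigenvectorBasis i.1) with hu
    have h0 : LinearIndependent ℝ (fun i : Lvl K G =>
        (hA.eigenvectorBasis i : EuclideanSpace ℝ (Lvl K G))) :=
      hA.eigenvectorBasis.orthonormal.linearIndependent
    have h1 := h0.map' (WithLp.linearEquiv 2 ℝ (Lvl K G → ℝ)).toLinearMap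
      (LinearEquiv.ker _)
    have h2 : LinearIndependent ℝ (fun i : Lvl K G =>
        (⇑(hA.eigenvectorBasis i) : Lvl K G → ℝ)) := h1
    have h3 : LinearIndependent ℝ u :=
      h2.comp Subtype.val Subtype.val_injective
    have hmem : ∀ i, u i ∈ LinearMap.range L := by
      intro i
      have hmv := hA.mulVec_eigenvectorBasis i.1
      have hBu : B *ᵥ u i = (hA.eigenvalues i.1 + ((K:ℝ)-1)⁻¹) • u i := by
        rw [hBdef, Matrix.add_mulVec, Matrix.smul_mulVec, Matrix.one_mulVec, hu, hmv,
          ← add_smul]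
      have hne : hA.eigenvalues i.1 + ((K:ℝ)-1)⁻¹ ≠ 0 := by
        intro h
        exact i.2 (by linarith)
      refine ⟨(hA.eigenvalues i.1 + ((K:ℝ)-1)⁻¹)⁻¹ • u i, ?_⟩
      rw [LinearMap.map_smul, hLdef, Matrix.mulVecLin_apply, hBu, smul_smul,
        inv_mul_cancel₀ hne, one_smul]
    have hsp := finrank_span_eq_card h3
    have hle : Submodule.span ℝ (Set.range u) ≤ LinearMap.range L :=
      Submodule.span_le.mpr (by rintro _ ⟨i, rfl⟩; exact hmem i)
    calc Fintype.card {i : Lvl K G // hA.eigenvalues i ≠ -((K:ℝ)-1)⁻¹}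
        = Module.finrank ℝ (Submodule.span ℝ (Set.range u)) := hsp.symm
      _ ≤ _ := Submodule.finrank_mono hle
  have hrn := LinearMap.finrank_range_add_finrank_ker L
  have hfr : Module.finrank ℝ (Lvl K G → ℝ) = Fintype.card (Lvl K G) :=
    Module.finrank_fintype_fun_eq_card ℝ
  have hcompl := Fintype.card_subtype_compl
    (fun i : Lvl K G => hA.eigenvalues i = -((K:ℝ)-1)⁻¹)
  have hcc : Fintype.card {i : Lvl K G // hA.eigenvalues i ≠ -((K:ℝ)-1)⁻¹}
      = Fintype.card {i : Lvl K G // ¬ (hA.eigenvalues i = -((K:ℝ)-1)⁻¹)} :=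
    Fintype.card_congr (Equiv.subtypeEquivRight fun _ => Iff.rfl)
  have hcle : Fintype.card {i : Lvl K G // hA.eigenvalues i = -((K:ℝ)-1)⁻¹}
      ≤ Fintype.card (Lvl K G) := Fintype.card_subtype_le _
  rw [hfr] at hrn
  omega

end


/-- Corollary 2 of the paper: the sorted eigenvalues `ν̄₁ ≤ ⋯ ≤ ν̄_{p−1}` of `Ā^(r)`
satisfy `ν̄₁ = ⋯ = ν̄_{K−1} = −1/(K−1)` and `ν̄_{p−1} = 1`. -/
theorem Abar_extreme_eigenvalues (K N : ℕ) (G : Fin K → ℕ)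
    (g : Fin N → ∀ k : Fin K, Fin (G k))
    (hK : 2 ≤ K) (hGk : ∀ k, 1 ≤ G k) (hN : 1 ≤ N)
    (hobs : ∀ (k : Fin K) (a : Fin (G k)), ∃ i, g i k = a)
    (hA : (Abar K N G g).IsHermitian)
    (ν : Fin (Fintype.card (Lvl K G)) → ℝ) (hmono : Monotone ν)
    (e : Lvl K G ≃ Fin (Fintype.card (Lvl K G)))
    (hν : ∀ c, hA.eigenvalues c = ν (e c)) :
    (∀ i : Fin (Fintype.card (Lvl K G)), (i : ℕ) < K - 1 →
      ν i = -1 / ((K : ℝ) - 1)) ∧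
    (∀ i : Fin (Fintype.card (Lvl K G)), (i : ℕ) = Fintype.card (Lvl K G) - 1 →
      ν i = 1) := by
  classical
  have hc : -1 / ((K:ℝ) - 1) = -((K:ℝ)-1)⁻¹ := by rw [neg_div, one_div]
  have hlow : ∀ j : Fin (Fintype.card (Lvl K G)), -((K:ℝ)-1)⁻¹ ≤ ν j := by
    intro j
    have := eig_lower K N G g hK hobs hA (e.symm j)
    rwa [hν, e.apply_symm_apply] at this
  have hupper : ∀ j, ν j ≤ 1 := by
    intro j
    have := eig_upper K N G g hK hobs hA (e.symm j)
    rwa [hν, e.apply_symm_apply] at this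
  have hone : ∃ j, ν j = 1 := by
    obtain ⟨i, hi⟩ := exists_eig_one K N G g hK hobs hGk hA
    exact ⟨e i, by rw [← hν, hi]⟩
  have hcard : K - 1 ≤ (Finset.univ.filter
      fun j : Fin (Fintype.card (Lvl K G)) => ν j = -((K:ℝ)-1)⁻¹).card := by
    have h1 := card_low_eigs K N G g hK hobs hGk hA
    have h2 : Fintype.card {i : Lvl K G // hA.eigenvalues i = -((K:ℝ)-1)⁻¹}
        ≤ (Finset.univ.filter
          fun j : Fin (Fintype.card (Lvl K G)) => ν j = -((K:ℝ)-1)⁻¹).card := by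
      rw [← Fintype.card_subtype]
      apply Fintype.card_le_of_injective
        (fun i => ⟨e i.1, by rw [← hν]; exact i.2⟩)
      intro a b hab
      have hv : e a.1 = e b.1 := congrArg Subtype.val hab
      exact Subtype.ext (e.injective hv)
    omega
  constructor
  · intro i hi
    rw [hc]
    by_contra hne
    have hgt : -((K:ℝ)-1)⁻¹ < ν i := lt_of_le_of_ne (hlow i) (Ne.symm hne)
    have hsub : (Finset.univ.filter
        fun j : Fin (Fintype.card (Lvl K G)) => ν j = -((K:ℝ)-1)⁻¹)
        ⊆ Finset.Iio i := by
      intro j hj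
      rw [Finset.mem_filter] at hj
      rw [Finset.mem_Iio]
      by_contra hji
      push_neg at hji
      have hle := hmono hji
      rw [hj.2] at hle
      exact absurd hle (not_le.mpr hgt)
    have hcle := Finset.card_le_card hsub
    rw [Fin.card_Iio] at hcle
    omega
  · intro i hi
    obtain ⟨j, hj⟩ := hone
    have hji : j ≤ i := by
      rw [Fin.le_def, hi]
      have := j.isLt
      omega
    exact le_antisymm (hupper i) (hj ▸ hmono hji)

end Crossed
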